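/- Let θ > 0 and f(x) = exp(-(1+x²)^{1/(2θ)}). Then f belongs to the Gelfand–Shilov space S_θ^1(ℝ): there exist constants C, h > 0 such that sup_{x∈ℝ} |x^α f^{(β)}(x)| ≤ C h^{α+β} (α!)^θ β! for all α, β ∈ ℕ. -/

import Mathlib

open Complex Metric Real

-- Cauchy derivative estimate
lemma GS_cauchy_deriv_bound {F : ℂ → ℂ} {w : ℂ} {r M : ℝ} (hr : 0 < r)
    (hd : DiffContOnCl ℂ F (Metric.ball w r))
    (hM : ∀ z ∈ Metric.closedBall w r, ‖F z‖ ≤ M) (n : ℕ) :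
    ‖iteratedDeriv n F w‖ ≤ n.factorial * M * r⁻¹ ^ n := by
  set R : NNReal := ⟨r, hr.le⟩ with hR
  have hRr : (R : ℝ) = r := rfl
  have hR0 : 0 < R := hr
  have h := hd.hasFPowerSeriesOnBall (R := R) hR0
  have hM0 : 0 ≤ M := le_trans (norm_nonneg _) (hM w (Metric.mem_closedBall_self hr.le))
  have h1 : iteratedDeriv n F w = n.factorial • (cauchyPowerSeries F w R n fun _ => 1) := by
    rw [iteratedDeriv_eq_iteratedFDeriv, ← h.factorial_smul 1 n]
  have hcont : Continuous fun θ : ℝ => ‖F (circleMap w R θ)‖ := by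
    have hFc : ContinuousOn F (Metric.closedBall w r) := by
      have := hd.continuousOn
      rwa [closure_ball w hr.ne'] at this
    exact (hFc.comp_continuous (continuous_circleMap w R)
      (fun θ => sphere_subset_closedBall (circleMap_mem_sphere w R.coe_nonneg θ))).norm
  have hint : (∫ θ : ℝ in (0)..2 * π, ‖F (circleMap w R θ)‖) ≤ 2 * π * M := by
    have := intervalIntegral.integral_mono_on (μ := MeasureTheory.volume) (f := fun θ : ℝ => ‖F (circleMap w R θ)‖) (g := fun _ : ℝ => M) Real.two_pi_pos.le
      (hcont.intervalIntegrable 0 (2*π)) (intervalIntegrable_const (c := M))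
      (fun θ _ => hM _ (sphere_subset_closedBall (circleMap_mem_sphere w R.coe_nonneg θ)))
    simpa using this
  have h2 : ‖cauchyPowerSeries F w R n‖ ≤ M * r⁻¹ ^ n := by
    refine (norm_cauchyPowerSeries_le F w R n).trans ?_
    have habsR : |(R : ℝ)| = r := by rw [hRr, abs_of_pos hr]
    rw [habsR]
    have : (2 * π)⁻¹ * (∫ θ : ℝ in (0)..2 * π, ‖F (circleMap w R θ)‖) ≤ M := by
      rw [inv_mul_le_iff₀ Real.two_pi_pos]
      linarith [hint]
    exact mul_le_mul_of_nonneg_right this (by positivity)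
  calc ‖iteratedDeriv n F w‖ = (n.factorial : ℝ) * ‖cauchyPowerSeries F w R n fun _ => 1‖ := by
        rw [h1, ← Nat.cast_smul_eq_nsmul ℂ, norm_smul]
        simp
    _ ≤ (n.factorial : ℝ) * ‖cauchyPowerSeries F w R n‖ := by
        refine mul_le_mul_of_nonneg_left ?_ (by positivity)
        have := (cauchyPowerSeries F w R n).le_opNorm (fun _ => 1)
        simpa using this
    _ ≤ (n.factorial : ℝ) * (M * r⁻¹ ^ n) := mul_le_mul_of_nonneg_left h2 (by positivity)
    _ = n.factorial * M * r⁻¹ ^ n := by ring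

-- bridge: real iterated derivative of the real part of a holomorphic function
lemma GS_bridge {s : Set ℂ} (hs : IsOpen s) (hmem : ∀ x : ℝ, (x : ℂ) ∈ s) (n : ℕ) :
    ∀ F : ℂ → ℂ, DifferentiableOn ℂ F s → ∀ x : ℝ,
      iteratedDeriv n (fun y : ℝ => (F (y : ℂ)).re) x = (iteratedDeriv n F (x : ℂ)).re := by
  induction n with
  | zero => intro F _ x; simp
  | succ n ih =>
    intro F hF x
    rw [iteratedDeriv_succ', iteratedDeriv_succ']
    have heq : deriv (fun y : ℝ => (F (y : ℂ)).re) = fun y : ℝ => ((deriv F) (y : ℂ)).re :=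
      funext fun y =>
        ((hF.differentiableAt (hs.mem_nhds (hmem y))).hasDerivAt.real_of_complex).deriv
    rw [heq]
    exact ih (deriv F) ((hF.analyticOnNhd hs).deriv.differentiableOn) x

lemma GS_re_lower {r : ℝ} (hr : 0 ≤ r) (hr2 : r ≤ 1/2) (x : ℝ) {z : ℂ}
    (hz : z ∈ Metric.closedBall (x : ℂ) r) : (1 + x ^ 2) / 4 ≤ (1 + z ^ 2).re := by
  have hd : ‖z - (x : ℂ)‖ ≤ r := by
    rwa [Metric.mem_closedBall, Complex.dist_eq] at hz
  have hre : |z.re - x| ≤ r := by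
    have := Complex.abs_re_le_norm (z - (x : ℂ))
    simpa using this.trans hd
  have him : |z.im| ≤ r := by
    have := Complex.abs_im_le_norm (z - (x : ℂ))
    simpa using this.trans hd
  have h1 : (z.re - x) ^ 2 ≤ r ^ 2 := sq_le_sq' (by linarith [(abs_le.1 hre).1]) (abs_le.1 hre).2
  have h2 : z.im ^ 2 ≤ r ^ 2 := sq_le_sq' (by linarith [(abs_le.1 him).1]) (abs_le.1 him).2
  have hwre : (1 + z ^ 2).re = 1 + (z.re * z.re - z.im * z.im) := by
    simp [pow_two, Complex.add_re, Complex.mul_re]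
  rw [hwre]
  nlinarith [sq_nonneg (2 * z.re - x), sq_nonneg r, hr2, hr, h1, h2]

lemma GS_im_upper {r : ℝ} (hr : 0 ≤ r) (hr2 : r ≤ 1/2) (x : ℝ) {z : ℂ}
    (hz : z ∈ Metric.closedBall (x : ℂ) r) : |(1 + z ^ 2).im| ≤ 2 * r * (1 + x ^ 2) := by
  have hd : ‖z - (x : ℂ)‖ ≤ r := by
    rwa [Metric.mem_closedBall, Complex.dist_eq] at hz
  have hre : |z.re - x| ≤ r := by
    have := Complex.abs_re_le_norm (z - (x : ℂ))
    simpa using this.trans hd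
  have him : |z.im| ≤ r := by
    have := Complex.abs_im_le_norm (z - (x : ℂ))
    simpa using this.trans hd
  have hwim : (1 + z ^ 2).im = 2 * (z.re * z.im) := by
    simp [pow_two, Complex.add_im, Complex.mul_im]; ring
  rw [hwim]
  have hzre : |z.re| ≤ |x| + r := by
    have := abs_sub_abs_le_abs_sub z.re x
    linarith [this.trans hre]
  have habs : |2 * (z.re * z.im)| = 2 * (|z.re| * |z.im|) := by
    rw [abs_mul, abs_mul]; norm_num
  rw [habs]
  have hxb : |x| + r ≤ 1 + x ^ 2 := by
    nlinarith [sq_nonneg (|x| - 1), _root_.sq_abs x]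
  nlinarith [abs_nonneg z.re, abs_nonneg z.im, abs_nonneg x]

lemma GS_cpow_re_lower {c r : ℝ} (hc : 0 < c) (hr : 0 < r) (hr2 : r ≤ 1/2)
    (hrc : 4 * Real.pi * c * r ≤ 1) (x : ℝ) {z : ℂ}
    (hz : z ∈ Metric.closedBall (x : ℂ) r) :
    1 / 2 * ((4 : ℝ) ^ c)⁻¹ * (1 + x ^ 2) ^ c ≤ ((1 + z ^ 2) ^ (c : ℂ)).re := by
  have hπ := Real.pi_pos
  set w : ℂ := 1 + z ^ 2 with hw
  have hbase : (0 : ℝ) < (1 + x ^ 2) / 4 := by positivity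
  have hre : (1 + x ^ 2) / 4 ≤ w.re := GS_re_lower hr.le hr2 x hz
  have him : |w.im| ≤ 2 * r * (1 + x ^ 2) := GS_im_upper hr.le hr2 x hz
  have hrepos : 0 < w.re := lt_of_lt_of_le hbase hre
  have hw0 : w ≠ 0 := fun h => by rw [h] at hrepos; simp at hrepos
  have habsw : (1 + x ^ 2) / 4 ≤ ‖w‖ := hre.trans (Complex.re_le_norm w)
  have habsw0 : 0 < ‖w‖ := lt_of_lt_of_le hbase habsw
  -- bound on |arg w|
  have harg_half : |Complex.arg w| ≤ Real.pi / 2 :=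
    Complex.abs_arg_le_pi_div_two_iff.2 hrepos.le
  have hsin_abs : Real.sin |Complex.arg w| = |Real.sin (Complex.arg w)| := by
    rcases le_or_gt 0 (Complex.arg w) with h | h
    · rw [_root_.abs_of_nonneg h, _root_.abs_of_nonneg (Real.sin_nonneg_of_nonneg_of_le_pi h
        (le_trans (le_abs_self _) (harg_half.trans (by linarith))))]
    · rw [abs_of_neg h, Real.sin_neg,
        _root_.abs_of_nonpos (Real.sin_nonpos_of_nonpos_of_neg_pi_le h.le
          (by linarith [(abs_le.1 harg_half).1]))]
  have hsinval : |Real.sin (Complex.arg w)| = |w.im| / ‖w‖ := by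
    rw [Complex.sin_arg, abs_div, abs_of_pos habsw0]
  have hfrac : |w.im| / ‖w‖ ≤ 8 * r := by
    rw [div_le_iff₀ habsw0]
    calc |w.im| ≤ 2 * r * (1 + x ^ 2) := him
      _ = 8 * r * ((1 + x ^ 2) / 4) := by ring
      _ ≤ 8 * r * ‖w‖ := by
          exact mul_le_mul_of_nonneg_left habsw (by positivity)
  have harg : |Complex.arg w| ≤ 4 * Real.pi * r := by
    have hjordan := Real.mul_le_sin (abs_nonneg (Complex.arg w)) harg_half
    rw [hsin_abs, hsinval] at hjordan
    have h8 : 2 / Real.pi * |Complex.arg w| ≤ 8 * r := hjordan.trans hfrac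
    calc |Complex.arg w| = Real.pi / 2 * (2 / Real.pi * |Complex.arg w|) := by
          field_simp
      _ ≤ Real.pi / 2 * (8 * r) := by
          exact mul_le_mul_of_nonneg_left h8 (by positivity)
      _ = 4 * Real.pi * r := by ring
  have hargc : |Complex.arg w * c| ≤ 1 := by
    rw [abs_mul, abs_of_pos hc]
    calc |Complex.arg w| * c ≤ 4 * Real.pi * r * c :=
          mul_le_mul_of_nonneg_right harg hc.le
      _ = 4 * Real.pi * c * r := by ring
      _ ≤ 1 := hrc
  have hcos : 1 / 2 ≤ Real.cos (Complex.arg w * c) := by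
    have h1 := Real.one_sub_sq_div_two_le_cos (x := Complex.arg w * c)
    have h2 : (Complex.arg w * c) ^ 2 ≤ 1 := by
      rw [← _root_.sq_abs]
      nlinarith [abs_nonneg (Complex.arg w * c)]
    linarith
  -- compute the real part
  have hre_val : ((w : ℂ) ^ (c : ℂ)).re
      = ‖w‖ ^ c * Real.cos (Complex.arg w * c) := by
    rw [Complex.cpow_def_of_ne_zero hw0, Complex.exp_re]
    congr 1
    · rw [Real.rpow_def_of_pos habsw0]
      congr 1
      simp [Complex.mul_re, Complex.log_re]
    · congr 1
      simp [Complex.mul_im, Complex.log_im]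
  rw [hre_val]
  have hpow : ((1 + x ^ 2) / 4 : ℝ) ^ c ≤ ‖w‖ ^ c :=
    Real.rpow_le_rpow hbase.le habsw hc.le
  have hpow2 : ((1 + x ^ 2) / 4 : ℝ) ^ c = (1 + x ^ 2) ^ c / (4 : ℝ) ^ c :=
    Real.div_rpow (by positivity) (by norm_num : (0:ℝ) ≤ 4) c
  calc 1 / 2 * ((4 : ℝ) ^ c)⁻¹ * (1 + x ^ 2) ^ c
      = ((1 + x ^ 2) / 4 : ℝ) ^ c * (1 / 2) := by rw [hpow2]; ring
    _ ≤ ‖w‖ ^ c * Real.cos (Complex.arg w * c) := by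
        exact mul_le_mul hpow hcos (by norm_num) (by positivity)

lemma GS_F_diff {c : ℝ} {z : ℂ} (hz : 0 < (1 + z ^ 2).re) :
    DifferentiableAt ℂ (fun w : ℂ => Complex.exp (-((1 + w ^ 2) ^ (c : ℂ)))) z := by
  apply DifferentiableAt.cexp
  apply DifferentiableAt.neg
  exact ((differentiableAt_const _).add (differentiableAt_pow 2)).cpow
    (differentiableAt_const _) (Complex.mem_slitPlane_iff.2 (Or.inl hz))

theorem GS_function_in_GelfandShilov (θ : ℝ) (hθ : 0 < θ) :
    ∃ C h : ℝ, 0 < C ∧ 0 < h ∧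
      ∀ (α β : ℕ) (x : ℝ),
        |x| ^ α * |iteratedDeriv β (fun y : ℝ => Real.exp (-((1 + y ^ 2) ^ (1 / (2 * θ))))) x|
          ≤ C * h ^ (α + β) * (Nat.factorial α : ℝ) ^ θ * (Nat.factorial β : ℝ) := by
  have hπ := Real.pi_pos
  set c : ℝ := 1 / (2 * θ) with hc_def
  have hc : 0 < c := by positivity
  set r : ℝ := min (1/2) ((4 * Real.pi * c + 1)⁻¹) with hr_def
  have hr : 0 < r := lt_min (by norm_num) (by positivity)
  have hr2 : r ≤ 1/2 := min_le_left _ _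
  have hrc : 4 * Real.pi * c * r ≤ 1 := by
    have h1 : r ≤ (4 * Real.pi * c + 1)⁻¹ := min_le_right _ _
    calc 4 * Real.pi * c * r ≤ 4 * Real.pi * c * (4 * Real.pi * c + 1)⁻¹ :=
          mul_le_mul_of_nonneg_left h1 (by positivity)
      _ = 4 * Real.pi * c / (4 * Real.pi * c + 1) := by rw [div_eq_mul_inv]
      _ ≤ 1 := div_le_one_of_le₀ (by linarith) (by positivity)
  set a : ℝ := 1 / 2 * ((4 : ℝ) ^ c)⁻¹ with ha_def
  have h4c : (0:ℝ) < (4:ℝ) ^ c := Real.rpow_pos_of_pos (by norm_num) c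
  have ha : 0 < a := by positivity
  set b : ℝ := a / θ with hb_def
  have hb : 0 < b := by positivity
  set h : ℝ := max 1 (max ((b ^ θ)⁻¹) r⁻¹) with hh_def
  have hbθ : (0:ℝ) < b ^ θ := Real.rpow_pos_of_pos hb θ
  refine ⟨1, h, one_pos, lt_of_lt_of_le one_pos (le_max_left _ _), ?_⟩
  intro α β x
  set F : ℂ → ℂ := fun w => Complex.exp (-((1 + w ^ 2) ^ (c : ℂ))) with hF_def
  -- rewrite using the complex extension
  have hfun : (fun y : ℝ => Real.exp (-((1 + y ^ 2) ^ c))) = fun y : ℝ => (F (y : ℂ)).re := by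
    funext y
    have h0 : (0:ℝ) ≤ 1 + y ^ 2 := by positivity
    simp only [hF_def]
    rw [show ((1:ℂ) + (y:ℂ) ^ 2) = ((1 + y ^ 2 : ℝ) : ℂ) by push_cast; ring,
      ← Complex.ofReal_cpow h0, ← Complex.ofReal_neg, ← Complex.ofReal_exp, Complex.ofReal_re]
  have hS_open : IsOpen {z : ℂ | 0 < (1 + z ^ 2).re} :=
    isOpen_lt continuous_const (Complex.continuous_re.comp
      (continuous_const.add (continuous_pow 2)))
  have hmemS : ∀ y : ℝ, ((y : ℂ)) ∈ {z : ℂ | 0 < (1 + z ^ 2).re} := by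
    intro y
    show (0:ℝ) < (1 + (y:ℂ) ^ 2).re
    rw [show ((1:ℂ) + (y:ℂ) ^ 2) = ((1 + y ^ 2 : ℝ) : ℂ) by push_cast; ring,
      Complex.ofReal_re]
    positivity
  have hFdiffS : DifferentiableOn ℂ F {z : ℂ | 0 < (1 + z ^ 2).re} :=
    fun z hz => (GS_F_diff hz).differentiableWithinAt
  have hbridge := GS_bridge hS_open hmemS β F hFdiffS x
  rw [hfun, hbridge]
  set t : ℝ := (1 + x ^ 2) ^ c with ht_def
  have ht1 : 1 ≤ t := Real.one_le_rpow (by nlinarith) hc.le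
  have ht0 : 0 < t := lt_of_lt_of_le one_pos ht1
  -- Cauchy estimate
  have hdiff : DiffContOnCl ℂ F (Metric.ball ((x : ℂ)) r) := by
    have hdon : DifferentiableOn ℂ F (Metric.closedBall ((x : ℂ)) r) := fun z hz =>
      (GS_F_diff (lt_of_lt_of_le (by positivity) (GS_re_lower hr.le hr2 x hz))).differentiableWithinAt
    exact DifferentiableOn.diffContOnCl (by rwa [closure_ball _ hr.ne'])
  have hM : ∀ z ∈ Metric.closedBall ((x : ℂ)) r, ‖F z‖ ≤ Real.exp (-(a * t)) := by
    intro z hz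
    have hkey := GS_cpow_re_lower hc hr hr2 hrc x hz
    simp only [hF_def]
    rw [Complex.norm_exp]
    apply Real.exp_le_exp.2
    simp only [Complex.neg_re]
    have hat : a * t ≤ ((1 + z ^ 2) ^ (c : ℂ)).re := hkey
    linarith
  have hderiv_bound : ‖iteratedDeriv β F ((x : ℂ))‖
      ≤ β.factorial * Real.exp (-(a * t)) * r⁻¹ ^ β :=
    GS_cauchy_deriv_bound hr hdiff hM β
  have h_absre : |(iteratedDeriv β F ((x : ℂ))).re| ≤ ‖iteratedDeriv β F ((x : ℂ))‖ := by
    exact Complex.abs_re_le_norm _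
  -- |x| ≤ t ^ θ
  have hxt : |x| ≤ t ^ θ := by
    have h1 : t ^ θ = (1 + x ^ 2) ^ (c * θ) := by
      rw [ht_def, ← Real.rpow_mul (by positivity)]
    have h2 : c * θ = 1 / 2 := by
      rw [hc_def]; field_simp; try ring
    rw [h1, h2, ← Real.sqrt_eq_rpow]
    rw [show |x| = Real.sqrt (x ^ 2) by rw [Real.sqrt_sq_eq_abs]]
    exact Real.sqrt_le_sqrt (by linarith)
  have hx_pow : |x| ^ α ≤ (t ^ θ) ^ α := pow_le_pow_left₀ (abs_nonneg x) hxt α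
  -- the key scalar inequality
  have e2 : t ^ α * Real.exp (-(b * t)) ≤ α.factorial / b ^ α := by
    have h3 : (b * t) ^ α ≤ α.factorial * Real.exp (b * t) := by
      have := Real.pow_div_factorial_le_exp (x := b * t) (by positivity) α
      rw [div_le_iff₀ (by positivity)] at this
      linarith [this]
    rw [le_div_iff₀ (by positivity : (0:ℝ) < b ^ α), Real.exp_neg]
    rw [show t ^ α * (Real.exp (b * t))⁻¹ * b ^ α = (b * t) ^ α / Real.exp (b * t) by
      rw [mul_pow]; ring]
    rw [div_le_iff₀ (Real.exp_pos _)]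
    linarith [h3]
  have e1 : (t ^ θ) ^ α * Real.exp (-(a * t)) = (t ^ α * Real.exp (-(b * t))) ^ θ := by
    rw [Real.mul_rpow (by positivity) (by positivity)]
    congr 1
    · rw [← Real.rpow_natCast (t ^ θ) α, ← Real.rpow_natCast t α,
        ← Real.rpow_mul ht0.le, ← Real.rpow_mul ht0.le, mul_comm θ (α:ℝ)]
    · rw [← Real.exp_mul]
      congr 1
      rw [hb_def]
      field_simp
  have e4 : ((α.factorial : ℝ) / b ^ α) ^ θ = (α.factorial : ℝ) ^ θ * ((b ^ θ)⁻¹) ^ α := by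
    rw [Real.div_rpow (by positivity) (by positivity) θ, div_eq_mul_inv, ← Real.rpow_natCast b α,
      ← Real.rpow_mul hb.le, mul_comm (α:ℝ) θ, Real.rpow_mul hb.le, Real.rpow_natCast, ← inv_pow]
  have e3 : (t ^ θ) ^ α * Real.exp (-(a * t))
      ≤ (α.factorial : ℝ) ^ θ * ((b ^ θ)⁻¹) ^ α := by
    rw [e1, ← e4]
    exact Real.rpow_le_rpow (by positivity) e2 hθ.le
  have p1 : ((b ^ θ)⁻¹) ^ α ≤ h ^ α :=
    pow_le_pow_left₀ (by positivity) ((le_max_left _ _).trans (le_max_right _ _)) α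
  have p2 : (r⁻¹) ^ β ≤ h ^ β :=
    pow_le_pow_left₀ (by positivity) ((le_max_right _ _).trans (le_max_right _ _)) β
  calc |x| ^ α * |(iteratedDeriv β F ((x : ℂ))).re|
      ≤ (t ^ θ) ^ α * (β.factorial * Real.exp (-(a * t)) * r⁻¹ ^ β) :=
        mul_le_mul hx_pow (h_absre.trans hderiv_bound) (abs_nonneg _) (by positivity)
    _ = ((t ^ θ) ^ α * Real.exp (-(a * t))) * β.factorial * r⁻¹ ^ β := by ring
    _ ≤ ((α.factorial : ℝ) ^ θ * ((b ^ θ)⁻¹) ^ α) * β.factorial * r⁻¹ ^ β := by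
        refine mul_le_mul_of_nonneg_right (mul_le_mul_of_nonneg_right e3 (by positivity)) ?_
        positivity
    _ ≤ ((α.factorial : ℝ) ^ θ * h ^ α) * β.factorial * h ^ β := by
        refine mul_le_mul (mul_le_mul_of_nonneg_right
          (mul_le_mul_of_nonneg_left p1 (by positivity)) (by positivity)) p2 (by positivity) ?_
        positivity
    _ = 1 * h ^ (α + β) * (α.factorial : ℝ) ^ θ * β.factorial := by
        rw [pow_add]; ring
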